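/- Let Γ be a group with Property FW, acting on a set E, and suppose X ⊆ E satisfies X △ γX finite for all γ ∈ Γ. Then there exists a Γ-invariant subset Y ⊆ E with X △ Y finite and such that for every finite subset F ⊆ Y there exists g ∈ Γ with gF ⊆ X. -/

import Mathlib

open Pointwise

lemma neumann_translate {Γ : Type*} [Group Γ] {E : Type*} [MulAction Γ E]
    {A B : Set E} (hA : A.Finite) (hB : B.Finite)
    (h : ∀ a ∈ A, (MulAction.orbit Γ a).Infinite) :
    ∃ g : Γ, Disjoint (g • A) B := by
  classical
  by_contra hc
  push_neg at hc
  set H : E × E → Subgroup Γ := fun i => MulAction.stabilizer Γ i.1 with hH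
  set g : E × E → Γ := fun i =>
    if h' : ∃ γ : Γ, γ • i.1 = i.2 then h'.choose else 1 with hg
  have hcovers : ⋃ i ∈ hA.toFinset ×ˢ hB.toFinset, (g i) • (H i : Set Γ) = Set.univ := by
    ext γ
    simp only [Set.mem_univ, iff_true, Set.mem_iUnion]
    obtain ⟨x, hxA, hxB⟩ := Set.not_disjoint_iff.mp (hc γ)
    obtain ⟨a, haA, rfl⟩ := hxA
    refine ⟨(a, γ • a), by simp [haA, hxB], ?_⟩
    have hex : ∃ δ : Γ, δ • a = γ • a := ⟨γ, rfl⟩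
    have hge : g (a, γ • a) • a = γ • a := by
      simp only [hg, dif_pos hex]
      exact hex.choose_spec
    have hmem : ((g (a, γ • a))⁻¹ * γ) ∈ H (a, γ • a) := by
      have : ((g (a, γ • a))⁻¹ * γ) • a = a := by
        rw [mul_smul, inv_smul_eq_iff, hge]
      exact this
    refine ⟨_, hmem, ?_⟩
    show g (a, γ • a) • ((g (a, γ • a))⁻¹ * γ) = γ
    rw [smul_eq_mul, mul_inv_cancel_left]
  obtain ⟨i, hi, hfi⟩ := Subgroup.exists_finiteIndex_of_leftCoset_cover hcovers
  simp only [Finset.mem_product, Set.Finite.mem_toFinset] at hi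
  have horb : (MulAction.orbit Γ i.1).Infinite := h i.1 hi.1
  haveI := hfi
  have : Finite (Γ ⧸ MulAction.stabilizer Γ i.1) :=
    by haveI : (MulAction.stabilizer Γ i.1).FiniteIndex := hfi; exact Subgroup.finite_quotient_of_finiteIndex
  exact horb ((MulAction.orbitEquivQuotientStabilizer Γ i.1).finite_iff.mpr this)

/-- A group `Γ` has Property FW if for every `Γ`-set `E` and every subset `X ⊆ E`
such that the symmetric difference `X △ γX` is finite for every `γ ∈ Γ`, there exists
a `Γ`-invariant subset `Y ⊆ E` with `X △ Y` finite. -/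
def HasPropertyFW (Γ : Type*) [Group Γ] : Prop :=
  ∀ (E : Type) [MulAction Γ E] (X : Set E),
    (∀ γ : Γ, (symmDiff X (γ • X)).Finite) →
    ∃ Y : Set E, (∀ γ : Γ, γ • Y = Y) ∧ (symmDiff X Y).Finite

/-- For a group with Property FW, the invariant set  can be chosen so that every
finite subset of  can be translated into . -/
theorem stmt_6 {Γ : Type*} [Group Γ] (hfw : HasPropertyFW Γ)
    (E : Type) [MulAction Γ E] (X : Set E)
    (hX : ∀ γ : Γ, (symmDiff X (γ • X)).Finite) :
    ∃ Y : Set E, (∀ γ : Γ, γ • Y = Y) ∧ (symmDiff X Y).Finite ∧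
      ∀ F : Set E, F ⊆ Y → F.Finite → ∃ g : Γ, g • F ⊆ X := by
  obtain ⟨Y, hinv, hfin⟩ := hfw E X hX
  have hDfin : (Y \ X).Finite := by
    refine hfin.subset ?_
    intro x hx
    rw [Set.mem_symmDiff]
    exact Or.inr ⟨hx.1, hx.2⟩
  have hmemY : ∀ (γ : Γ) (x : E), x ∈ Y ↔ γ⁻¹ • x ∈ Y := fun γ x => by
    rw [← Set.mem_smul_set_iff_inv_smul_mem, hinv]
  have horbY : ∀ {y : E}, y ∈ Y → MulAction.orbit Γ y ⊆ Y := by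
    rintro y hy z ⟨γ, rfl⟩
    rw [← hinv γ]
    exact Set.smul_mem_smul_set hy
  set Y' : Set E := {y ∈ Y | (MulAction.orbit Γ y).Infinite ∨ MulAction.orbit Γ y ⊆ X}
    with hY'
  have hY'sub : Y' ⊆ Y := fun y hy => hy.1
  refine ⟨Y', ?_, ?_, ?_⟩
  · intro γ
    ext x
    rw [Set.mem_smul_set_iff_inv_smul_mem]
    simp only [hY', Set.mem_setOf_eq]
    rw [MulAction.orbit_smul, ← hmemY]
  · have hYY' : (Y \ Y').Finite := by
      have hD' : ({d ∈ Y \ X | (MulAction.orbit Γ d).Finite}).Finite :=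
        hDfin.subset (Set.sep_subset _ _)
      refine (Set.Finite.biUnion hD' (fun d hd => hd.2)).subset ?_
      intro y hy
      have hyY : y ∈ Y := hy.1
      have hnot : ¬((MulAction.orbit Γ y).Infinite ∨ MulAction.orbit Γ y ⊆ X) :=
        fun hc => hy.2 ⟨hyY, hc⟩
      push_neg at hnot
      obtain ⟨hfinorb, hnsub⟩ := hnot
      obtain ⟨d, hdorb, hdX⟩ := Set.not_subset.mp hnsub
      have hdy : y ∈ MulAction.orbit Γ d := MulAction.mem_orbit_symm.mpr hdorb
      have horbeq : MulAction.orbit Γ d = MulAction.orbit Γ y :=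
        (MulAction.orbit_eq_iff.mpr hdorb)
      refine Set.mem_biUnion (s := {d ∈ Y \ X | (MulAction.orbit Γ d).Finite})
        ⟨⟨horbY hyY hdorb, hdX⟩, horbeq ▸ hfinorb⟩ hdy
    refine (hfin.union hYY').subset ?_
    intro x hx
    rw [Set.mem_symmDiff] at hx
    rcases hx with ⟨hxX, hxY'⟩ | ⟨hxY', hxX⟩
    · by_cases hxY : x ∈ Y
      · exact Or.inr ⟨hxY, hxY'⟩
      · exact Or.inl (Set.mem_symmDiff.mpr (Or.inl ⟨hxX, hxY⟩))
    · exact Or.inl (Set.mem_symmDiff.mpr (Or.inr ⟨hY'sub hxY', hxX⟩))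
  · intro F hF hFfin
    obtain ⟨g, hg⟩ := neumann_translate (Γ := Γ)
      (hFfin.subset (Set.sep_subset F (fun x => (MulAction.orbit Γ x).Infinite)))
      hDfin (fun a ha => ha.2)
    refine ⟨g, ?_⟩
    rintro z ⟨x, hxF, rfl⟩
    have hxY' := hF hxF
    by_cases hx : (MulAction.orbit Γ x).Infinite
    · have hgY : g • x ∈ Y := horbY hxY'.1 (MulAction.mem_orbit _ g)
      by_contra hnX
      exact Set.disjoint_left.mp hg (Set.smul_mem_smul_set ⟨hxF, hx⟩) ⟨hgY, hnX⟩
    · exact (hxY'.2.resolve_left hx) (MulAction.mem_orbit _ g)
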